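/- For any language L ⊆ Σ_{r^m}*, the convex hull of ξ(L*) equals the convex hull of ξ(L), i.e., conv({ξ(σ) : σ ∈ L*, σ ≠ ε}) = conv({ξ(σ) : σ ∈ L, σ ≠ ε}), where L* is the Kleene star of L. -/

import Mathlib

/-- The alphabet `Σ_{r^m}` of digit vectors. -/
abbrev Alpha (r m : ℕ) := Fin m → Fin r
abbrev Word (r m : ℕ) := List (Alpha r m)

/-- `ρ(b₁⋯bₙ) = Σᵢ r^(i-1)·bᵢ` (least significant digit first), viewed in `ℝ^m`. -/
noncomputable def rho (r m : ℕ) : Word r m → (Fin m → ℝ)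
  | [] => 0
  | b :: w => (fun j => (b j : ℝ)) + (r : ℝ) • rho r m w

/-- `Γ_σ(x) = r^|σ|·x + ρ(σ)`. -/
noncomputable def Gam (r m : ℕ) (σ : Word r m) (x : Fin m → ℝ) : Fin m → ℝ :=
  (r : ℝ) ^ σ.length • x + rho r m σ

/-- The inverse bijection `Γ_σ⁻¹(y) = (y - ρ(σ))/r^|σ|`. -/
noncomputable def GamInv (r m : ℕ) (σ : Word r m) (y : Fin m → ℝ) : Fin m → ℝ :=
  ((r : ℝ) ^ σ.length)⁻¹ • (y - rho r m σ)

/-- `ξ(σ) = ρ(σ)/(1 - r^|σ|)` (meaningful for nonempty `σ`). -/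
noncomputable def xi (r m : ℕ) (σ : Word r m) : Fin m → ℝ :=
  (1 - (r : ℝ) ^ σ.length)⁻¹ • rho r m σ

/-- `ρ(L) = {ρ(σ) : σ ∈ L}`. -/
def rhoSet (r m : ℕ) (L : Set (Word r m)) : Set (Fin m → ℝ) :=
  {x | ∃ σ ∈ L, x = rho r m σ}

/-- `ξ(L) = {ξ(σ) : σ ∈ L, σ ≠ ε}`. -/
def xiSet (r m : ℕ) (L : Set (Word r m)) : Set (Fin m → ℝ) :=
  {x | ∃ σ ∈ L, σ ≠ [] ∧ x = xi r m σ}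

/-- Kleene star of a language. -/
def kstar' {α : Type*} (L : Set (List α)) : Set (List α) :=
  {w | ∃ ws : List (List α), (∀ u ∈ ws, u ∈ L) ∧ w = ws.flatten}

/-- Concatenation of two languages. -/
def catL {α : Type*} (A B : Set (List α)) : Set (List α) :=
  {w | ∃ a ∈ A, ∃ b ∈ B, w = a ++ b}

/-- `chainLang σ Ls n = σ_{n+1}·(L_n)*·σ_n ⋯ (L_1)*·σ_1`. -/
def chainLang {α : Type*} (σ : ℕ → List α) (Ls : ℕ → Set (List α)) : ℕ → Set (List α)
  | 0 => {σ 1}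
  | n + 1 => catL {σ (n + 2)} (catL (kstar' (Ls (n + 1))) (chainLang σ Ls n))

/-- `catDown σ hi lo = σ_hi·σ_{hi-1}⋯σ_lo` (empty if `lo > hi`). -/
def catDown {α : Type*} (σ : ℕ → List α) (hi lo : ℕ) : List α :=
  ((List.range (hi + 1 - lo)).map fun j => σ (hi - j)).flatten

/-- `catUp σ k = σ_1·σ_2⋯σ_k`. -/
def catUp {α : Type*} (σ : ℕ → List α) (k : ℕ) : List α :=
  ((List.range k).map fun j => σ (j + 1)).flatten

/-- `σ^k`, the `k`-fold concatenation of `σ`. -/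
def repK {α : Type*} (σ : List α) (k : ℕ) : List α := (List.replicate k σ).flatten

/-- `ℝ₋·X = {t·x : t ≤ 0, x ∈ X}`. -/
def negSmul {m : ℕ} (X : Set (Fin m → ℝ)) : Set (Fin m → ℝ) :=
  {y | ∃ t : ℝ, t ≤ 0 ∧ ∃ x ∈ X, y = t • x}

/-- The cone `C(R)` generated by a finite set of rays. -/
def coneOf {m : ℕ} (R : Finset ((Fin m → ℝ) × ℝ)) : Set ((Fin m → ℝ) × ℝ) :=
  {y | ∃ t : ((Fin m → ℝ) × ℝ) → ℝ, (∀ p, 0 ≤ t p) ∧ y = ∑ p ∈ R, t p • p}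

/-- The polyhedral convex set `P(R) = {x : (x,1) ∈ C(R)}`. -/
def polyOf {m : ℕ} (R : Finset ((Fin m → ℝ) × ℝ)) : Set (Fin m → ℝ) :=
  {x | (x, (1 : ℝ)) ∈ coneOf R}

lemma rho_append (r m : ℕ) (a b : Word r m) :
    rho r m (a ++ b) = rho r m a + (r : ℝ) ^ a.length • rho r m b := by
  induction a with
  | nil => simp [rho]
  | cons x a ih =>
    show rho r m (x :: (a ++ b)) = _
    simp only [rho, ih, List.length_cons, pow_succ, smul_add, smul_smul]
    module

lemma one_lt_pow_len (r : ℕ) (hr : 2 ≤ r) {n : ℕ} (hn : n ≠ 0) :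
    (1 : ℝ) < (r : ℝ) ^ n := by
  have : (2 : ℝ) ≤ (r : ℝ) := by exact_mod_cast hr
  calc (1:ℝ) < 2 ^ n := one_lt_pow₀ one_lt_two hn
  _ ≤ (r:ℝ) ^ n := pow_le_pow_left₀ (by norm_num) this n

lemma xi_append (r m : ℕ) (hr : 2 ≤ r) (a b : Word r m) (ha : a ≠ []) (hb : b ≠ []) :
    ∃ l : ℝ, 0 ≤ l ∧ l ≤ 1 ∧
      xi r m (a ++ b) = l • xi r m a + (1 - l) • xi r m b := by
  set s : ℝ := (r : ℝ) ^ a.length with hs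
  set t : ℝ := (r : ℝ) ^ b.length with ht
  have hs1 : 1 < s := one_lt_pow_len r hr (by simpa using ha)
  have ht1 : 1 < t := one_lt_pow_len r hr (by simpa using hb)
  have hst1 : 1 < s * t := by nlinarith
  have hden : (1 : ℝ) - s * t ≠ 0 := by linarith
  have hsne : (1 : ℝ) - s ≠ 0 := by linarith
  have htne : (1 : ℝ) - t ≠ 0 := by linarith
  refine ⟨(1 - s) / (1 - s * t), ?_, ?_, ?_⟩
  · rw [div_nonneg_iff]; right; constructor <;> linarith
  · rw [div_le_iff_of_neg (by linarith : 1 - s * t < 0)]; nlinarith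
  · have hone : 1 - (1 - s) / (1 - s * t) = s * (1 - t) / (1 - s * t) := by
      field_simp; ring
    rw [hone]
    unfold xi
    rw [rho_append, List.length_append, pow_add, ← hs, ← ht, smul_add,
      smul_smul, smul_smul, smul_smul]
    have e1 : (1 - s) / (1 - s * t) * (1 - s)⁻¹ = (1 - s * t)⁻¹ := by
      field_simp
    have e2 : s * (1 - t) / (1 - s * t) * (1 - t)⁻¹ = (1 - s * t)⁻¹ * s := by
      field_simp
    rw [e1, e2]

lemma xi_flatten_mem (r m : ℕ) (hr : 2 ≤ r) (L : Set (Word r m)) :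
    ∀ ws : List (Word r m), (∀ u ∈ ws, u ∈ L) → ws.flatten ≠ [] →
      xi r m ws.flatten ∈ convexHull ℝ (xiSet r m L) := by
  intro ws
  induction ws with
  | nil => intro _ h; simp at h
  | cons u ws ih =>
    intro hmem hne
    rcases eq_or_ne u [] with hu | hu
    · subst hu
      simpa using ih (fun v hv => hmem v (List.mem_cons_of_mem _ hv)) (by simpa using hne)
    · rcases eq_or_ne ws.flatten [] with hw | hw
      · have : (u :: ws).flatten = u := by simp [List.flatten, hw]
        rw [this]
        exact subset_convexHull ℝ _ ⟨u, hmem u List.mem_cons_self, hu, rfl⟩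
      · have hflat : (u :: ws).flatten = u ++ ws.flatten := by simp [List.flatten]
        rw [hflat]
        obtain ⟨l, hl0, hl1, heq⟩ := xi_append r m hr u ws.flatten hu hw
        rw [heq]
        have h1 : xi r m u ∈ convexHull ℝ (xiSet r m L) :=
          subset_convexHull ℝ _ ⟨u, hmem u List.mem_cons_self, hu, rfl⟩
        have h2 : xi r m ws.flatten ∈ convexHull ℝ (xiSet r m L) :=
          ih (fun v hv => hmem v (List.mem_cons_of_mem _ hv)) hw
        exact (convex_convexHull ℝ _) h1 h2 hl0 (by linarith) (by ring)

/-- Lemma 2 of the paper: `conv(ξ(L*)) = conv(ξ(L))`. -/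
theorem convexHull_xiSet_kstar (r m : ℕ) (hr : 2 ≤ r) (hm : 1 ≤ m)
    (L : Set (Word r m)) :
    convexHull ℝ (xiSet r m (kstar' L)) = convexHull ℝ (xiSet r m L) := by
  apply le_antisymm
  · refine convexHull_min ?_ (convex_convexHull ℝ _)
    rintro x ⟨σ, ⟨ws, hws, rfl⟩, hne, rfl⟩
    exact xi_flatten_mem r m hr L ws hws hne
  · apply convexHull_mono
    rintro x ⟨σ, hσ, hne, rfl⟩
    exact ⟨σ, ⟨[σ], by simpa using hσ, by simp⟩, hne, rfl⟩
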